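/- arXiv:2403.07295 — 6 statements merged into one kernel-verified Lean document; each statement's English description precedes it below -/
import Mathlib

section
/- Let d ≥ 1 be an integer and let Z be a nonzero d×d real symmetric positive semidefinite matrix. Then for every η > 0 there exists a constant C > 0 such that for every d×d real symmetric positive semidefinite matrix R with ‖R‖_F ≤ η one has (det R)^{1/d} ≤ C · (tr(R·Z))^{rank(Z)/d}. -/
open Matrix Finset

open scoped MatrixOrder in
private lemma psd_entry_sq_le {d : ℕ} {M : Matrix (Fin d) (Fin d) ℝ} (hM : M.PosSemidef)
    (i j : Fin d) : (M i j) ^ 2 ≤ M i i * M j j := by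
  obtain ⟨B, hB⟩ := CStarAlgebra.nonneg_iff_eq_star_mul_self.mp hM.nonneg
  have key : ∀ a b, M a b = ∑ k, B k a * B k b := by
    intro a b
    simp [hB, Matrix.mul_apply]
  rw [key i j, key i i, key j j]
  have := Finset.sum_mul_sq_le_sq_mul_sq Finset.univ
    (fun k => B k i) (fun k => B k j)
  simpa only [pow_two] using this

private lemma psd_diag_nonneg {d : ℕ} {M : Matrix (Fin d) (Fin d) ℝ} (hM : M.PosSemidef)
    (i : Fin d) : 0 ≤ M i i := by
  exact hM.diag_nonneg

private lemma psd_det_le {d : ℕ} {M : Matrix (Fin d) (Fin d) ℝ} (hM : M.PosSemidef) :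
    M.det ≤ ((Nat.factorial d : ℕ) : ℝ) * ∏ i, M i i := by
  have hdiag : ∀ i, 0 ≤ M i i := psd_diag_nonneg hM
  have hperm : ∀ σ : Equiv.Perm (Fin d), ∏ i, |M (σ i) i| ≤ ∏ i, M i i := by
    intro σ
    calc ∏ i, |M (σ i) i|
        ≤ ∏ i, (Real.sqrt (M (σ i) (σ i)) * Real.sqrt (M i i)) := by
          refine Finset.prod_le_prod (fun i _ => abs_nonneg _) (fun i _ => ?_)
          calc |M (σ i) i| = Real.sqrt ((M (σ i) i) ^ 2) := (Real.sqrt_sq_eq_abs _).symm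
            _ ≤ Real.sqrt (M (σ i) (σ i) * M i i) :=
                Real.sqrt_le_sqrt (psd_entry_sq_le hM (σ i) i)
            _ = Real.sqrt (M (σ i) (σ i)) * Real.sqrt (M i i) :=
                Real.sqrt_mul (hdiag _) _
      _ = (∏ i, Real.sqrt (M (σ i) (σ i))) * ∏ i, Real.sqrt (M i i) :=
          Finset.prod_mul_distrib
      _ = (∏ i, Real.sqrt (M i i)) * ∏ i, Real.sqrt (M i i) := by
          rw [Equiv.prod_comp σ (fun i => Real.sqrt (M i i))]
      _ = ∏ i, (Real.sqrt (M i i) * Real.sqrt (M i i)) := Finset.prod_mul_distrib.symm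
      _ = ∏ i, M i i := Finset.prod_congr rfl fun i _ => Real.mul_self_sqrt (hdiag i)
  calc M.det ≤ |M.det| := le_abs_self _
    _ ≤ ∑ σ : Equiv.Perm (Fin d), |Equiv.Perm.sign σ • ∏ i, M (σ i) i| := by
        rw [Matrix.det_apply]; exact Finset.abs_sum_le_sum_abs _ _
    _ ≤ ∑ _σ : Equiv.Perm (Fin d), ∏ i, M i i := by
        refine Finset.sum_le_sum fun σ _ => ?_
        have h1 : |Equiv.Perm.sign σ • ∏ i, M (σ i) i| = |∏ i, M (σ i) i| := by
          rcases Int.units_eq_one_or (Equiv.Perm.sign σ) with h | h <;> simp [h]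
        rw [h1, Finset.abs_prod]
        exact hperm σ
    _ = ((Nat.factorial d : ℕ) : ℝ) * ∏ i, M i i := by
        rw [Finset.sum_const, Finset.card_univ, Fintype.card_perm, Fintype.card_fin,
          nsmul_eq_mul]

/-- Lemma 2.1: for nonzero PSD `Z`, on every Frobenius ball of radius `η` there is `C > 0` with
`(det R)^(1/d) ≤ C * (tr (R*Z))^(rank Z / d)` for all PSD `R` in the ball. -/
theorem stmt_0 (d : ℕ) (hd : 1 ≤ d) (Z : Matrix (Fin d) (Fin d) ℝ)
    (hZ : Z.PosSemidef) (hZ0 : Z ≠ 0) :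
    ∀ η : ℝ, 0 < η → ∃ C : ℝ, 0 < C ∧ ∀ R : Matrix (Fin d) (Fin d) ℝ,
      R.PosSemidef → Real.sqrt ((R * R).trace) ≤ η →
      R.det ^ ((1 : ℝ) / d) ≤ C * ((R * Z).trace) ^ ((Z.rank : ℝ) / d) := by
  intro η hη
  have hH : Z.IsHermitian := hZ.1
  set U : Matrix (Fin d) (Fin d) ℝ := (hH.eigenvectorUnitary : Matrix (Fin d) (Fin d) ℝ) with hU
  set ev : Fin d → ℝ := hH.eigenvalues with hev
  have hZspec : Z = U * diagonal ev * star U := by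
    have := hH.spectral_theorem
    simpa [RCLike.ofReal_real_eq_id] using this
  have hVU : star U * U = 1 := Matrix.mem_unitaryGroup_iff'.mp hH.eigenvectorUnitary.2
  have hUV : U * star U = 1 := Matrix.mem_unitaryGroup_iff.mp hH.eigenvectorUnitary.2
  -- the set of nonzero eigenvalues
  classical
  set Sf : Finset (Fin d) := Finset.univ.filter (fun i => ev i ≠ 0) with hSf
  have hSne : Sf.Nonempty := by
    rw [Finset.filter_nonempty_iff]
    by_contra h
    push_neg at h
    apply hZ0
    have hev0 : ev = fun _ => 0 := funext fun i => h i (Finset.mem_univ i)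
    rw [hZspec, hev0]
    simp
  have hrcard : Z.rank = Sf.card := by
    rw [hH.rank_eq_card_non_zero_eigs]
    exact Fintype.card_subtype _
  have hrle : Z.rank ≤ d := by
    rw [hrcard]
    simpa using Finset.card_le_univ Sf
  set lam : ℝ := Sf.inf' hSne ev with hlam
  have hlampos : 0 < lam := by
    rw [hlam, Finset.lt_inf'_iff]
    intro i hi
    rw [hSf, Finset.mem_filter] at hi
    exact lt_of_le_of_ne (hZ.eigenvalues_nonneg i) (Ne.symm hi.2)
  set K : ℝ := ((Nat.factorial d : ℕ) : ℝ) * η ^ (d - Z.rank) / lam ^ Z.rank with hK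
  have hKpos : 0 < K := by
    rw [hK]
    have : (0:ℝ) < ((Nat.factorial d : ℕ) : ℝ) := by exact_mod_cast Nat.factorial_pos d
    positivity
  refine ⟨K ^ ((1:ℝ)/d), Real.rpow_pos_of_pos hKpos _, ?_⟩
  intro R hR hRnorm
  set M : Matrix (Fin d) (Fin d) ℝ := star U * R * U with hMdef
  have hM : M.PosSemidef := by
    have := hR.conjTranspose_mul_mul_same U
    exact this
  set t : ℝ := (R * Z).trace with ht
  -- trace identity
  have htr : t = ∑ i, M i i * ev i := by
    rw [ht, hZspec, ← Matrix.mul_assoc, ← Matrix.mul_assoc, Matrix.trace_mul_comm]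
    have : star U * (R * U * diagonal ev) = M * diagonal ev := by
      simp only [hMdef, Matrix.mul_assoc]
    rw [this]
    simp [Matrix.trace, Matrix.diag]
  have hdiagnn : ∀ i, 0 ≤ M i i := psd_diag_nonneg hM
  have ht0 : 0 ≤ t := by
    rw [htr]
    exact Finset.sum_nonneg fun i _ => mul_nonneg (hdiagnn i) (hZ.eigenvalues_nonneg i)
  -- diagonal entries bounded by η
  have hMM : (M * M).trace = (R * R).trace := by
    have h2 : M * M = star U * (R * R) * U := by
      calc M * M = star U * R * ((U * star U) * (R * U)) := by
            simp only [hMdef, Matrix.mul_assoc]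
        _ = star U * (R * R) * U := by
            rw [hUV, one_mul]; simp only [Matrix.mul_assoc]
    rw [h2, Matrix.trace_mul_cycle, ← Matrix.mul_assoc, hUV, one_mul]
  have htrsq : (M * M).trace = ∑ a, ∑ b, (M a b) ^ 2 := by
    simp only [Matrix.trace, Matrix.diag, Matrix.mul_apply]
    refine Finset.sum_congr rfl fun a _ => Finset.sum_congr rfl fun b _ => ?_
    have hsymm : M b a = M a b := by
      rw [← hM.1.apply a b, star_trivial]
    rw [hsymm, pow_two]
  have hMMnn : 0 ≤ (M * M).trace := by
    rw [htrsq]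
    exact Finset.sum_nonneg fun a _ => Finset.sum_nonneg fun b _ => sq_nonneg _
  have hdiagle : ∀ i, M i i ≤ η := by
    intro i
    have h1 : (M i i) ^ 2 ≤ (M * M).trace := by
      rw [htrsq]
      calc (M i i) ^ 2 ≤ ∑ b, (M i b) ^ 2 :=
            Finset.single_le_sum (f := fun b => (M i b) ^ 2)
              (fun _ _ => sq_nonneg _) (Finset.mem_univ i)
        _ ≤ ∑ a, ∑ b, (M a b) ^ 2 :=
            Finset.single_le_sum
              (fun a _ => Finset.sum_nonneg fun b _ => sq_nonneg (M a b))
              (Finset.mem_univ i)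
    have h2 : (M i i) ^ 2 ≤ η ^ 2 := by
      refine h1.trans ?_
      have := Real.sq_sqrt hMMnn
      calc (M * M).trace = Real.sqrt ((M * M).trace) ^ 2 := (Real.sq_sqrt hMMnn).symm
        _ ≤ η ^ 2 := by
            have hle : Real.sqrt ((M * M).trace) ≤ η := by rw [hMM]; exact hRnorm
            exact pow_le_pow_left₀ (Real.sqrt_nonneg _) hle 2
    calc M i i ≤ |M i i| := le_abs_self _
      _ = Real.sqrt ((M i i) ^ 2) := (Real.sqrt_sq_eq_abs _).symm
      _ ≤ Real.sqrt (η ^ 2) := Real.sqrt_le_sqrt h2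
      _ = η := Real.sqrt_sq hη.le
  -- diagonal entries on S bounded by t / lam
  have hMS : ∀ i ∈ Sf, M i i ≤ t / lam := by
    intro i hi
    rw [le_div_iff₀ hlampos]
    have h1 : M i i * lam ≤ M i i * ev i :=
      mul_le_mul_of_nonneg_left (Finset.inf'_le ev hi) (hdiagnn i)
    refine h1.trans ?_
    rw [htr]
    exact Finset.single_le_sum
      (fun j _ => mul_nonneg (hdiagnn j) (hZ.eigenvalues_nonneg j)) (Finset.mem_univ i)
  -- determinant identity
  have hdetRM : R.det = M.det := by
    have h2 : M.det = (star U).det * R.det * U.det := by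
      rw [hMdef, Matrix.det_mul, Matrix.det_mul]
    have h1 : (star U).det * U.det = 1 := by
      rw [← Matrix.det_mul, hVU, Matrix.det_one]
    rw [h2]
    calc R.det = ((star U).det * U.det) * R.det := by rw [h1, one_mul]
      _ = (star U).det * R.det * U.det := by ring
  -- main bound
  have hmain : R.det ≤ K * t ^ Z.rank := by
    rw [hdetRM]
    calc M.det ≤ ((Nat.factorial d : ℕ) : ℝ) * ∏ i, M i i := psd_det_le hM
      _ = ((Nat.factorial d : ℕ) : ℝ) * ((∏ i ∈ Sf, M i i) * ∏ i ∈ Sfᶜ, M i i) := by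
          rw [Finset.prod_mul_prod_compl]
      _ ≤ ((Nat.factorial d : ℕ) : ℝ) * ((t / lam) ^ Z.rank * η ^ (d - Z.rank)) := by
          refine mul_le_mul_of_nonneg_left ?_ (by positivity)
          have hA : ∏ i ∈ Sf, M i i ≤ (t / lam) ^ Z.rank := by
            calc ∏ i ∈ Sf, M i i ≤ ∏ _i ∈ Sf, (t / lam) :=
                  Finset.prod_le_prod (fun i _ => hdiagnn i) hMS
              _ = (t / lam) ^ Z.rank := by rw [Finset.prod_const, hrcard]
          have hB : ∏ i ∈ Sfᶜ, M i i ≤ η ^ (d - Z.rank) := by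
            calc ∏ i ∈ Sfᶜ, M i i ≤ ∏ _i ∈ Sfᶜ, η :=
                  Finset.prod_le_prod (fun i _ => hdiagnn i) (fun i _ => hdiagle i)
              _ = η ^ (d - Z.rank) := by
                  rw [Finset.prod_const, Finset.card_compl, hrcard]
                  simp
          have hAnn : (0:ℝ) ≤ ∏ i ∈ Sf, M i i :=
            Finset.prod_nonneg fun i _ => hdiagnn i
          have hBnn : (0:ℝ) ≤ ∏ i ∈ Sfᶜ, M i i :=
            Finset.prod_nonneg fun i _ => hdiagnn i
          exact mul_le_mul hA hB hBnn (by positivity)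
      _ = K * t ^ Z.rank := by
          rw [hK, div_pow]
          field_simp
  have hdet0 : 0 ≤ R.det := by
    exact hR.det_nonneg
  calc R.det ^ ((1:ℝ)/d) ≤ (K * t ^ Z.rank) ^ ((1:ℝ)/d) :=
        Real.rpow_le_rpow hdet0 hmain (by positivity)
    _ = K ^ ((1:ℝ)/d) * t ^ ((Z.rank : ℝ)/d) := by
        rw [Real.mul_rpow hKpos.le (pow_nonneg ht0 _), ← Real.rpow_natCast t Z.rank,
          ← Real.rpow_mul ht0, mul_one_div]
end

section
/- Let d ≥ 2 be an integer, let n_x < 0 be real, let n_Z be a d×d real symmetric positive definite matrix, and set n := (n_x, n_x·(log(det(−n_Z/n_x)) + d), n_Z) ∈ E. Then K_logdet ∩ {q ∈ E : ⟨q, n⟩ = 0} = {y · f_r : y ≥ 0}, where f_r := (log(det(−n_x · n_Z^{-1})), 1, −n_x · n_Z^{-1}). -/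
open Matrix Filter

noncomputable section

/-- The space `E = ℝ × ℝ × S^d` (matrix parts are required to be symmetric where relevant). -/
abbrev E (d : ℕ) : Type := ℝ × ℝ × Matrix (Fin d) (Fin d) ℝ

/-- The inner product `⟨(x,y,Z),(x',y',Z')⟩ = x x' + y y' + tr (Z Z')` on `E`. -/
def ip {d : ℕ} (p q : E d) : ℝ := p.1 * q.1 + p.2.1 * q.2.1 + (p.2.2 * q.2.2).trace

/-- The induced norm `‖(x,y,Z)‖ = sqrt (x² + y² + tr (Z²))` on `E`. -/
def nrm {d : ℕ} (p : E d) : ℝ := Real.sqrt (p.1 ^ 2 + p.2.1 ^ 2 + (p.2.2 * p.2.2).trace)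

/-- Distance from a point to a set: `dist(p, S) = inf {‖p - s‖ : s ∈ S}`. -/
def sdist {d : ℕ} (p : E d) (S : Set (E d)) : ℝ := sInf {r : ℝ | ∃ s ∈ S, r = nrm (p - s)}

/-- The log-determinant cone `K_logdet`. -/
def Klogdet (d : ℕ) : Set (E d) :=
  {p | (0 < p.2.1 ∧ p.2.2.PosDef ∧ p.1 ≤ p.2.1 * Real.log ((p.2.1⁻¹ • p.2.2).det))
    ∨ (p.1 ≤ 0 ∧ p.2.1 = 0 ∧ p.2.2.PosSemidef)}

lemma herm_trace_eq_sum {d : ℕ} {A : Matrix (Fin d) (Fin d) ℝ} (hA : A.IsHermitian) :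
    A.trace = ∑ i, hA.eigenvalues i := by
  nth_rewrite 1 [hA.spectral_theorem]
  rw [Unitary.conjStarAlgAut_apply, Matrix.trace_mul_cycle,
    Matrix.mem_unitaryGroup_iff'.mp (hA.eigenvectorUnitary).2, one_mul, Matrix.trace_diagonal]
  simp

lemma herm_eq_smul_one {d : ℕ} {A : Matrix (Fin d) (Fin d) ℝ} (hA : A.IsHermitian) {c : ℝ}
    (h : ∀ i, hA.eigenvalues i = c) : A = c • (1 : Matrix (Fin d) (Fin d) ℝ) := by
  have hfun : (RCLike.ofReal ∘ hA.eigenvalues : Fin d → ℝ) = fun _ => c := by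
    funext i; simp [h i]
  have hdiag : Matrix.diagonal (RCLike.ofReal ∘ hA.eigenvalues)
      = c • (1 : Matrix (Fin d) (Fin d) ℝ) := by
    rw [Matrix.smul_one_eq_diagonal, hfun]
  rw [hA.spectral_theorem, hdiag, Unitary.conjStarAlgAut_apply, mul_smul_comm, smul_mul_assoc, mul_one,
    Matrix.mem_unitaryGroup_iff.mp (hA.eigenvectorUnitary).2]

lemma psd_trace_nonneg {d : ℕ} {M : Matrix (Fin d) (Fin d) ℝ} (hM : M.PosSemidef) :
    0 ≤ M.trace := by
  rw [herm_trace_eq_sum hM.1]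
  exact Finset.sum_nonneg fun i _ => hM.eigenvalues_nonneg i

lemma psd_trace_zero {d : ℕ} {M : Matrix (Fin d) (Fin d) ℝ} (hM : M.PosSemidef)
    (h : M.trace = 0) : M = 0 := by
  rw [herm_trace_eq_sum hM.1] at h
  have h0 : ∀ i ∈ Finset.univ, hM.1.eigenvalues i = 0 :=
    (Finset.sum_eq_zero_iff_of_nonneg (fun i _ => hM.eigenvalues_nonneg i)).mp h
  simpa using herm_eq_smul_one hM.1 (c := 0) fun i => h0 i (Finset.mem_univ i)

lemma logdet_trace_key {d : ℕ} {A : Matrix (Fin d) (Fin d) ℝ} (hA : A.PosSemidef)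
    (hdet : 0 < A.det) :
    Real.log A.det + d ≤ A.trace ∧ (A.trace ≤ Real.log A.det + d → A = 1) := by
  set μ := hA.1.eigenvalues with hμ
  have hdet' : A.det = ∏ i, μ i := by simpa using hA.1.det_eq_prod_eigenvalues
  have hμpos : ∀ i, 0 < μ i := by
    intro i
    rcases (hA.eigenvalues_nonneg i).lt_or_eq with h | h
    · exact h
    · exact absurd (hdet'.trans (Finset.prod_eq_zero (Finset.mem_univ i) h.symm)) hdet.ne'
  have hlog : Real.log A.det = ∑ i, Real.log (μ i) := by
    rw [hdet', Real.log_prod fun i _ => (hμpos i).ne']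
  have htr : A.trace = ∑ i, μ i := herm_trace_eq_sum hA.1
  have hle : ∀ i, Real.log (μ i) ≤ μ i - 1 := fun i => Real.log_le_sub_one_of_pos (hμpos i)
  have hsum1 : ∑ i, Real.log (μ i) ≤ ∑ i, (μ i - 1) := Finset.sum_le_sum fun i _ => hle i
  have hcard : ∑ _i : Fin d, (1 : ℝ) = d := by simp
  have hsub : ∑ i, (μ i - 1) = (∑ i, μ i) - d := by rw [Finset.sum_sub_distrib, hcard]
  constructor
  · rw [hlog, htr]; linarith [hsum1, hsub.le, hsub.ge]
  · intro heq
    have hall : ∀ i, μ i = 1 := by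
      by_contra hc
      push_neg at hc
      obtain ⟨j, hj⟩ := hc
      have hstrict : ∑ i, Real.log (μ i) < ∑ i, (μ i - 1) :=
        Finset.sum_lt_sum (fun i _ => hle i)
          ⟨j, Finset.mem_univ j, Real.log_lt_sub_one_of_pos (hμpos j) hj⟩
      rw [hlog, htr] at heq
      linarith [hsub]
    simpa using herm_eq_smul_one hA.1 hall

lemma psd_smul {d : ℕ} {c : ℝ} {M : Matrix (Fin d) (Fin d) ℝ} (hc : 0 ≤ c)
    (hM : M.PosSemidef) : (c • M).PosSemidef := by
  exact hM.smul hc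

lemma pd_smul {d : ℕ} {c : ℝ} {M : Matrix (Fin d) (Fin d) ℝ} (hc : 0 < c)
    (hM : M.PosDef) : (c • M).PosDef := by
  exact hM.smul hc

open scoped MatrixOrder in
/-- Matrix square root via the continuous functional calculus. -/
def msqrt {d : ℕ} (W : Matrix (Fin d) (Fin d) ℝ) : Matrix (Fin d) (Fin d) ℝ := CFC.sqrt W

open scoped MatrixOrder in
lemma msqrt_mul_self {d : ℕ} {W : Matrix (Fin d) (Fin d) ℝ} (hW : W.PosSemidef) :
    msqrt W * msqrt W = W :=
  CFC.sqrt_mul_sqrt_self W (Matrix.nonneg_iff_posSemidef.mpr hW)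

open scoped MatrixOrder in
lemma msqrt_isHermitian {d : ℕ} (W : Matrix (Fin d) (Fin d) ℝ) : (msqrt W).IsHermitian :=
  (Matrix.nonneg_iff_posSemidef.mp (CFC.sqrt_nonneg W)).1

lemma psd_eq_ctmul {d : ℕ} {Z : Matrix (Fin d) (Fin d) ℝ} (hZ : Z.PosSemidef) :
    ∃ B : Matrix (Fin d) (Fin d) ℝ, Z = Bᴴ * B :=
  ⟨msqrt Z, by rw [(msqrt_isHermitian Z).eq]; exact (msqrt_mul_self hZ).symm⟩

lemma psd_trace_mul_nonneg {d : ℕ} {Z W : Matrix (Fin d) (Fin d) ℝ} (hZ : Z.PosSemidef)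
    (hW : W.PosSemidef) : 0 ≤ (Z * W).trace := by
  obtain ⟨B, rfl⟩ := psd_eq_ctmul hZ
  rw [Matrix.mul_assoc, Matrix.trace_mul_comm]
  exact psd_trace_nonneg (hW.mul_mul_conjTranspose_same B)

lemma eq_zero_of_trace_mul_eq_zero {d : ℕ} {Z W : Matrix (Fin d) (Fin d) ℝ}
    (hZ : Z.PosSemidef) (hW : W.PosDef) (h : (Z * W).trace = 0) : Z = 0 := by
  set R := msqrt W with hR
  have hRR : R * R = W := msqrt_mul_self hW.posSemidef
  have hRH : R.IsHermitian := msqrt_isHermitian W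
  have hRdet : IsUnit R.det := by
    have hd : R.det * R.det = W.det := by rw [← Matrix.det_mul, hRR]
    refine isUnit_iff_ne_zero.mpr fun h0 => ?_
    rw [h0, mul_zero] at hd
    exact hW.det_pos.ne' hd.symm
  have h2 : (R * Z * R).trace = 0 := by
    rw [Matrix.trace_mul_cycle, hRR, Matrix.trace_mul_comm, h]
  have hpsd : (R * Z * R).PosSemidef := by
    have := hZ.conjTranspose_mul_mul_same R
    rwa [hRH] at this
  have hzero : R * Z * R = 0 := psd_trace_zero hpsd h2
  calc Z = R⁻¹ * (R * Z * R) * R⁻¹ := by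
        rw [← Matrix.mul_assoc, ← Matrix.mul_assoc, Matrix.nonsing_inv_mul _ hRdet, one_mul,
          Matrix.mul_assoc, Matrix.mul_nonsing_inv _ hRdet, mul_one]
    _ = 0 := by rw [hzero]; simp

set_option maxHeartbeats 2000000 in
/-- Proposition 3.1(a): the face of `K_logdet` exposed by
`n = (n_x, n_x (log det (-n_Z/n_x) + d), n_Z)` with `n_x < 0`, `n_Z ≻ 0` is the ray through
`f_r = (log det (-n_x n_Z⁻¹), 1, -n_x n_Z⁻¹)`. -/
theorem stmt_3 (d : ℕ) (hd : 2 ≤ d) (nx : ℝ) (hnx : nx < 0)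
    (nZ : Matrix (Fin d) (Fin d) ℝ) (hnZ : nZ.PosDef) :
    Klogdet d ∩
        {q : E d | ip q (nx, nx * (Real.log (((-(nx⁻¹)) • nZ).det) + d), nZ) = 0}
      = {p : E d | ∃ y : ℝ, 0 ≤ y ∧
          p = y • ((Real.log (((-nx) • nZ⁻¹).det), 1, (-nx) • nZ⁻¹) : E d)} := by
  have hnxpos : 0 < -nx := neg_pos.mpr hnx
  have hnxne : nx ≠ 0 := hnx.ne
  have hdetnZ : 0 < nZ.det := hnZ.det_pos
  have hdetnZu : IsUnit nZ.det := isUnit_iff_ne_zero.mpr hdetnZ.ne'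
  set a := Real.log (-nx) with ha
  set e := Real.log nZ.det with he
  have hL : Real.log (((-nx) • nZ⁻¹).det) = d * a - e := by
    rw [Matrix.det_smul, Fintype.card_fin, Matrix.det_nonsing_inv, Ring.inverse_eq_inv,
      Real.log_mul (pow_ne_zero _ hnxpos.ne') (inv_ne_zero hdetnZ.ne'),
      Real.log_pow, Real.log_inv]
    ring
  have hL2 : Real.log (((-(nx⁻¹)) • nZ).det) = -(d * a) + e := by
    rw [Matrix.det_smul, Fintype.card_fin, neg_inv,
      Real.log_mul (pow_ne_zero _ (inv_ne_zero hnxpos.ne')) hdetnZ.ne',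
      Real.log_pow, Real.log_inv]
    ring
  ext q
  obtain ⟨x, y, Z⟩ := q
  simp only [Set.mem_inter_iff, Set.mem_setOf_eq, Klogdet, ip]
  constructor
  · rintro ⟨hK, hplane⟩
    rw [hL2] at hplane
    rcases hK with ⟨hy, hZpd, hx⟩ | ⟨hx, hy0, hZpsd⟩
    · -- main case : y > 0
      have hyne : y ≠ 0 := hy.ne'
      set b := Real.log y with hb
      set c := Real.log Z.det with hc
      have h1 : Real.log ((y⁻¹ • Z).det) = -(d * b) + c := by
        rw [Matrix.det_smul, Fintype.card_fin,
          Real.log_mul (pow_ne_zero _ (inv_ne_zero hyne)) hZpd.det_pos.ne',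
          Real.log_pow, Real.log_inv]
        ring
      rw [h1] at hx
      set R := msqrt nZ with hRdef
      have hRR : R * R = nZ := msqrt_mul_self hnZ.posSemidef
      have hRH : R.IsHermitian := msqrt_isHermitian nZ
      have hRdet2 : R.det * R.det = nZ.det := by rw [← Matrix.det_mul, hRR]
      have hRdet : IsUnit R.det := by
        refine isUnit_iff_ne_zero.mpr fun h0 => ?_
        rw [h0, mul_zero] at hRdet2
        exact hdetnZ.ne' hRdet2.symm
      set s : ℝ := ((-nx) * y)⁻¹ with hs
      have hspos : 0 < s := by rw [hs]; positivity
      have hsy : ((-nx) * y) * s = 1 := by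
        rw [hs]; exact mul_inv_cancel₀ (by positivity)
      set A := s • (R * Z * R) with hA
      have hA_psd : A.PosSemidef := by
        refine psd_smul hspos.le ?_
        have := hZpd.posSemidef.conjTranspose_mul_mul_same R
        rwa [hRH] at this
      have hAdet : A.det = s ^ d * (Z.det * nZ.det) := by
        rw [hA, Matrix.det_smul, Fintype.card_fin, Matrix.det_mul, Matrix.det_mul,
          show R.det * Z.det * R.det = Z.det * (R.det * R.det) from by ring, hRdet2]
      have hAdetpos : 0 < A.det := by
        rw [hAdet]
        exact mul_pos (pow_pos hspos d) (mul_pos hZpd.det_pos hdetnZ)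
      have hlogA : Real.log A.det = d * Real.log s + (c + e) := by
        rw [hAdet, Real.log_mul (pow_ne_zero _ hspos.ne')
          (mul_pos hZpd.det_pos hdetnZ).ne', Real.log_pow,
          Real.log_mul hZpd.det_pos.ne' hdetnZ.ne']
      have hlogs : Real.log s = -(a + b) := by
        rw [hs, Real.log_inv, Real.log_mul hnxpos.ne' hyne]
      have htrA : A.trace = s * (Z * nZ).trace := by
        rw [hA, Matrix.trace_smul, smul_eq_mul, Matrix.trace_mul_cycle, hRR,
          Matrix.trace_mul_comm]
      have key := logdet_trace_key hA_psd hAdetpos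
      set T := (Z * nZ).trace with hT
      have hkey1 : (d : ℝ) * Real.log s + (c + e) + d ≤ s * T := by
        have h0 := key.1
        rw [hlogA, htrA] at h0
        linarith
      have hLB : ((-nx) * y) * (c + e + d - d * a - d * b) ≤ T := by
        rw [hlogs] at hkey1
        have h2 : c + e + d - d * a - d * b ≤ s * T := by linarith
        have h3 := mul_le_mul_of_nonneg_left h2
          (le_of_lt (by positivity : (0:ℝ) < (-nx) * y))
        calc ((-nx) * y) * (c + e + d - d * a - d * b) ≤ ((-nx) * y) * (s * T) := h3
          _ = (((-nx) * y) * s) * T := by ring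
          _ = T := by rw [hsy, one_mul]
      have hUB : T ≤ ((-nx) * y) * (c + e + d - d * a - d * b) := by
        have hmul : (-nx) * x ≤ (-nx) * (y * (-(d * b) + c)) :=
          mul_le_mul_of_nonneg_left hx hnxpos.le
        linarith [hplane, hmul]
      have hTeq : T = ((-nx) * y) * (c + e + d - d * a - d * b) := le_antisymm hUB hLB
      have hAone : A = 1 := by
        apply key.2
        rw [hlogA, htrA, hlogs, hTeq]
        have hcanc : s * (((-nx) * y) * (c + e + d - (d:ℝ) * a - d * b))
            = c + e + d - (d:ℝ) * a - d * b := by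
          rw [← mul_assoc, mul_comm s, hsy, one_mul]
        rw [hcanc]
        have : (d:ℝ) * -(a + b) + (c + e) + d = c + e + d - (d:ℝ) * a - d * b := by ring
        rw [this]
      have hRZR : R * Z * R = s⁻¹ • (1 : Matrix (Fin d) (Fin d) ℝ) := by
        have h4 := congrArg (fun M => s⁻¹ • M) hAone
        simpa [hA, smul_smul, inv_mul_cancel₀ hspos.ne'] using h4
      have hZeq : Z = y • ((-nx) • nZ⁻¹) := by
        have hZ1 : Z = R⁻¹ * (R * Z * R) * R⁻¹ := by
          rw [← Matrix.mul_assoc, ← Matrix.mul_assoc, Matrix.nonsing_inv_mul _ hRdet, one_mul,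
            Matrix.mul_assoc, Matrix.mul_nonsing_inv _ hRdet, mul_one]
        have hinv : R⁻¹ * R⁻¹ = nZ⁻¹ := by rw [← Matrix.mul_inv_rev, hRR]
        rw [hZ1, hRZR, mul_smul_comm, smul_mul_assoc, mul_one, hinv, hs, inv_inv,
          smul_smul, mul_comm]
      have hxeq : x = y * Real.log (((-nx) • nZ⁻¹).det) := by
        have hnxx : nx * x = nx * (y * (-(d * b) + c)) := by linarith [hplane, hTeq]
        have hx2 : x = y * (-(d * b) + c) := mul_left_cancel₀ hnxne hnxx
        have h5 : y⁻¹ • Z = (-nx) • nZ⁻¹ := by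
          rw [hZeq, smul_smul, inv_mul_cancel₀ hyne, one_smul]
        rw [← h5, h1]
        exact hx2
      exact ⟨y, hy.le, by
        simp only [Prod.smul_mk, smul_eq_mul, mul_one, Prod.mk.injEq]
        exact ⟨hxeq, trivial, hZeq⟩⟩
    · -- boundary case : y = 0
      subst hy0
      rw [zero_mul, add_zero] at hplane
      have h1 : 0 ≤ x * nx := by nlinarith [mul_nonneg (neg_nonneg.mpr hx) hnxpos.le]
      have h2 : 0 ≤ (Z * nZ).trace := psd_trace_mul_nonneg hZpsd hnZ.posSemidef
      have hxnx : x * nx = 0 := by linarith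
      have hx0 : x = 0 := by
        rcases mul_eq_zero.mp hxnx with h | h
        · exact h
        · exact absurd h hnxne
      have hZ0 : Z = 0 := eq_zero_of_trace_mul_eq_zero hZpsd hnZ (by linarith)
      exact ⟨0, le_refl 0, by simp [hx0, hZ0, Prod.ext_iff]⟩
  · rintro ⟨yy, hyy, heq⟩
    rw [Prod.ext_iff] at heq
    obtain ⟨hx, heq2⟩ := heq
    rw [Prod.ext_iff] at heq2
    obtain ⟨hy2, hZ⟩ := heq2
    simp only [Prod.smul_mk, smul_eq_mul, mul_one] at hx hy2 hZ
    subst hx; subst hZ; subst hy2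
    constructor
    · rcases eq_or_lt_of_le hyy with h0 | hy'
      · right
        rw [← h0]
        refine ⟨by simp, rfl, ?_⟩
        simpa using Matrix.PosSemidef.zero
      · left
        refine ⟨hy', pd_smul hy' (pd_smul hnxpos hnZ.inv), ?_⟩
        rw [smul_smul, inv_mul_cancel₀ hy'.ne', one_smul]
    · have htr : ((y • ((-nx) • nZ⁻¹)) * nZ).trace = y * ((-nx) * d) := by
        rw [Matrix.smul_mul, Matrix.trace_smul, smul_eq_mul, Matrix.smul_mul,
          Matrix.trace_smul, smul_eq_mul, Matrix.nonsing_inv_mul _ hdetnZu,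
          Matrix.trace_one, Fintype.card_fin]
      rw [hL2, hL, htr]
      ring
end
end

section
/- Let d ≥ 2 be an integer, let n_y ≥ 0 be real, and let n_Z be a d×d real symmetric positive semidefinite matrix with 0 < rank(n_Z) < d; set n := (0, n_y, n_Z) ∈ E. Then K_logdet ∩ {q ∈ E : ⟨q, n⟩ = 0} = {(x, 0, Z) ∈ E : x ≤ 0, Z is positive semidefinite, and tr(Z·n_Z) = 0}. -/
open Matrix Filter

noncomputable section

lemma trace_mul_pos_of_posDef {d : ℕ} {Z nZ : Matrix (Fin d) (Fin d) ℝ}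
    (hZ : Z.PosDef) (hnZ : nZ.PosSemidef) (hne : nZ ≠ 0) : 0 < (Z * nZ).trace := by
  obtain ⟨B, rfl⟩ : ∃ B : Matrix (Fin d) (Fin d) ℝ, nZ = Bᴴ * B := by
    open scoped MatrixOrder in exact CStarAlgebra.nonneg_iff_eq_star_mul_self.mp hnZ.nonneg
  have hB : B ≠ 0 := by rintro rfl; simp at hne
  have htr : (Z * Bᴴ * B).trace = (B * Z * Bᴴ).trace := by
    rw [Matrix.trace_mul_cycle]
  rw [← Matrix.mul_assoc, htr, Matrix.trace]
  have hterm : ∀ i, (B * Z * Bᴴ).diag i = star (B i) ⬝ᵥ Z *ᵥ (B i) := by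
    intro i
    simp only [Matrix.diag, Matrix.mul_apply, Matrix.conjTranspose_apply, dotProduct,
      Matrix.mulVec, star_trivial]
    simp_rw [Finset.sum_mul, Finset.mul_sum]
    rw [Finset.sum_comm]
    exact Finset.sum_congr rfl fun k _ => Finset.sum_congr rfl fun j _ => by ring
  obtain ⟨i0, hi0⟩ : ∃ i, B i ≠ 0 := by
    by_contra h
    push_neg at h
    exact hB (by ext i j; simp [h i])
  refine Finset.sum_pos' (fun i _ => ?_) ⟨i0, Finset.mem_univ i0, ?_⟩
  · rw [hterm i]
    by_cases h : B i = 0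
    · simp [h]
    · exact le_of_lt (hZ.dotProduct_mulVec_pos h)
  · rw [hterm i0]
    exact hZ.dotProduct_mulVec_pos hi0

/-- Proposition 3.1(c): the face of `K_logdet` exposed by `n = (0, n_y, n_Z)` with `n_y ≥ 0`,
`n_Z ⪰ 0`, `0 < rank n_Z < d` is `F_s = ℝ₋ × {0} × (S₊ᵈ ∩ {n_Z}^⊥)`. -/
theorem stmt_5 (d : ℕ) (hd : 2 ≤ d) (ny : ℝ) (hny : 0 ≤ ny)
    (nZ : Matrix (Fin d) (Fin d) ℝ) (hnZ : nZ.PosSemidef)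
    (hrank_pos : 0 < nZ.rank) (hrank_lt : nZ.rank < d) :
    Klogdet d ∩ {q : E d | ip q (0, ny, nZ) = 0}
      = {p : E d | p.1 ≤ 0 ∧ p.2.1 = 0 ∧ p.2.2.PosSemidef ∧ (p.2.2 * nZ).trace = 0} := by
  have hne : nZ ≠ 0 := by
    rintro rfl
    simp [Matrix.rank_zero] at hrank_pos
  ext ⟨x, y, Z⟩
  simp only [Set.mem_inter_iff, Set.mem_setOf_eq, Klogdet, ip]
  constructor
  · rintro ⟨hK, hip⟩
    simp only [mul_zero, zero_add] at hip
    rcases hK with ⟨hy, hZpd, _⟩ | ⟨hx, hy0, hpsd⟩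
    · exfalso
      have h1 : 0 < (Z * nZ).trace := trace_mul_pos_of_posDef hZpd hnZ hne
      have h2 : 0 ≤ y * ny := mul_nonneg hy.le hny
      linarith
    · refine ⟨hx, hy0, hpsd, ?_⟩
      rw [hy0] at hip
      linarith
  · rintro ⟨hx, hy0, hpsd, htr⟩
    exact ⟨Or.inr ⟨hx, hy0, hpsd⟩, by simp [hy0, htr]⟩
end
end

section
/- Let d ≥ 2 be an integer, let n_y ≥ 0 be real, and let n_Z be a d×d real symmetric positive definite matrix; set n := (0, n_y, n_Z) ∈ E. Then K_logdet ∩ {q ∈ E : ⟨q, n⟩ = 0} = {(x, 0, 0) ∈ E : x ≤ 0}, where the last component is the zero matrix. -/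
open Matrix Filter

noncomputable section

lemma key_trace {d : ℕ} {Z nZ : Matrix (Fin d) (Fin d) ℝ} (hZ : Z.PosSemidef)
    (hnZ : nZ.PosDef) : 0 ≤ (Z * nZ).trace ∧ ((Z * nZ).trace = 0 → Z = 0) := by
  obtain ⟨C, rfl⟩ : ∃ C : Matrix (Fin d) (Fin d) ℝ, Z = Cᴴ * C := by
    open scoped MatrixOrder Matrix.Norms.L2Operator in
    exact CStarAlgebra.nonneg_iff_eq_star_mul_self.mp hZ.nonneg
  have htr : (Cᴴ * C * nZ).trace = ∑ i, dotProduct (star (fun j => C i j))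
      (nZ *ᵥ (fun j => C i j)) := by
    rw [mul_assoc, trace_mul_comm, trace]
    refine Finset.sum_congr rfl fun i _ => ?_
    simp only [diag_apply, mul_apply, dotProduct, mulVec, star_trivial, Finset.sum_mul,
      conjTranspose_apply, RCLike.star_def, starRingEnd_apply, star_trivial]
    rw [Finset.sum_comm]
    refine Finset.sum_congr rfl fun j _ => ?_
    rw [Finset.mul_sum]
    exact Finset.sum_congr rfl fun k _ => by ring
  have hnn : ∀ i : Fin d, 0 ≤ dotProduct (star (fun j => C i j)) (nZ *ᵥ (fun j => C i j)) :=
    fun i => (posSemidef_iff_dotProduct_mulVec.mp hnZ.posSemidef).2 _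
  constructor
  · rw [htr]; exact Finset.sum_nonneg fun i _ => hnn i
  · intro h0
    rw [htr] at h0
    have := (Finset.sum_eq_zero_iff_of_nonneg (fun i _ => hnn i)).mp h0
    have hC : C = 0 := by
      ext i j
      by_contra hij
      have hv : (fun j => C i j) ≠ 0 := fun h => hij (by simpa using congrFun h j)
      exact absurd (this i (Finset.mem_univ i)) (ne_of_gt ((posDef_iff_dotProduct_mulVec.mp hnZ).2 hv))
    simp [hC]

/-- Proposition 3.1(d): the face of `K_logdet` exposed by `n = (0, n_y, n_Z)` with `n_y ≥ 0`
and `n_Z ≻ 0` is `F_∞ = ℝ₋ × {0} × {0}`. -/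
theorem stmt_6 (d : ℕ) (hd : 2 ≤ d) (ny : ℝ) (hny : 0 ≤ ny)
    (nZ : Matrix (Fin d) (Fin d) ℝ) (hnZ : nZ.PosDef) :
    Klogdet d ∩ {q : E d | ip q (0, ny, nZ) = 0}
      = {p : E d | p.1 ≤ 0 ∧ p.2.1 = 0 ∧ p.2.2 = 0} := by
  haveI : Nonempty (Fin d) := ⟨⟨0, by omega⟩⟩
  ext ⟨x, y, Z⟩
  simp only [Set.mem_inter_iff, Set.mem_setOf_eq, Klogdet, ip, mul_zero, zero_add]
  constructor
  · rintro ⟨hK, hip⟩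
    rcases hK with ⟨hy, hZ, _⟩ | ⟨hx, hy, hZ⟩
    · exfalso
      have h1 := (key_trace hZ.posSemidef hnZ).1
      have h2 : y * ny ≥ 0 := mul_nonneg hy.le hny
      have htr0 : (Z * nZ).trace = 0 := by linarith
      have hZ0 := (key_trace hZ.posSemidef hnZ).2 htr0
      exact absurd (hZ0 ▸ hZ.det_pos) (by simp [Matrix.det_zero])
    · have htr0 : (Z * nZ).trace = 0 := by rw [hy] at hip; linarith
      exact ⟨hx, hy, (key_trace hZ hnZ).2 htr0⟩
  · rintro ⟨hx, hy, hZ⟩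
    subst hy; subst hZ
    exact ⟨Or.inr ⟨hx, rfl, Matrix.PosSemidef.zero⟩, by simp⟩
end
end

section
/- Let d ≥ 1 be an integer and let v = (x, y, Z) ∈ E. Then ⟨v, q⟩ ≥ 0 for all q ∈ K_logdet if and only if either (x < 0, Z is positive definite, and y ≥ x·(log(det(−Z/x)) + d)) or (x = 0, y ≥ 0, and Z is positive semidefinite). In other words, the dual cone of K_logdet with respect to ⟨·,·⟩ equals {(x,y,Z) ∈ E : x < 0, Z positive definite, y ≥ x·(log(det(−Z/x)) + d)} ∪ ({0} × [0,∞) × {Z : Z positive semidefinite}). -/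
open Matrix Filter

noncomputable section

section
open scoped MatrixOrder

/-- Square root of a positive semidefinite matrix. -/
def Matrix.PosSemidef.sqrt {d : ℕ} {A : Matrix (Fin d) (Fin d) ℝ} (_hA : A.PosSemidef) :
    Matrix (Fin d) (Fin d) ℝ := CFC.sqrt A

lemma Matrix.PosSemidef.posSemidef_sqrt {d : ℕ} {A : Matrix (Fin d) (Fin d) ℝ}
    (hA : A.PosSemidef) : hA.sqrt.PosSemidef := (CFC.sqrt_nonneg A).posSemidef

lemma Matrix.PosSemidef.sqrt_mul_self {d : ℕ} {A : Matrix (Fin d) (Fin d) ℝ}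
    (hA : A.PosSemidef) : hA.sqrt * hA.sqrt = A := CFC.sqrt_mul_sqrt_self A hA.nonneg

end

namespace LogDetAux

variable {d : ℕ}

lemma trace_nonneg_of_psd {A : Matrix (Fin d) (Fin d) ℝ} (hA : A.PosSemidef) :
    0 ≤ A.trace :=
  Finset.sum_nonneg fun i _ => by simpa using hA.dotProduct_mulVec_nonneg (Pi.single i 1)

lemma trace_mul_nonneg {A B : Matrix (Fin d) (Fin d) ℝ} (hA : A.PosSemidef) (hB : B.PosSemidef) :
    0 ≤ (A * B).trace := by
  have h1 : (hB.sqrtᴴ * A * hB.sqrt).PosSemidef := hA.conjTranspose_mul_mul_same _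
  have h2 : (hB.sqrtᴴ * A * hB.sqrt).trace = (A * B).trace := by
    rw [hB.posSemidef_sqrt.1.eq, Matrix.trace_mul_cycle, hB.sqrt_mul_self,
      Matrix.trace_mul_comm]
  rw [← h2]
  exact trace_nonneg_of_psd h1

lemma posSemidef_smul {A : Matrix (Fin d) (Fin d) ℝ} (hA : A.PosSemidef) {c : ℝ} (hc : 0 ≤ c) :
    (c • A).PosSemidef := by
  refine Matrix.PosSemidef.of_dotProduct_mulVec_nonneg ?_ fun v => ?_
  · unfold Matrix.IsHermitian
    rw [conjTranspose_smul, hA.1.eq]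
    simp
  · rw [smul_mulVec, dotProduct_smul, smul_eq_mul]
    exact mul_nonneg hc (hA.dotProduct_mulVec_nonneg v)

lemma posDef_smul' {A : Matrix (Fin d) (Fin d) ℝ} (hA : A.PosDef) {c : ℝ} (hc : 0 < c) :
    (c • A).PosDef := by
  refine Matrix.PosDef.of_dotProduct_mulVec_pos ?_ fun v hv => ?_
  · unfold Matrix.IsHermitian
    rw [conjTranspose_smul, hA.1.eq]
    simp
  · rw [smul_mulVec, dotProduct_smul, smul_eq_mul]
    exact mul_pos hc (hA.dotProduct_mulVec_pos hv)

lemma vecMulVec_psd (v : Fin d → ℝ) : (vecMulVec v v).PosSemidef := by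
  refine Matrix.PosSemidef.of_dotProduct_mulVec_nonneg ?_ fun x => ?_
  · unfold Matrix.IsHermitian
    ext i j
    simp [vecMulVec_apply, mul_comm]
  · have h : (vecMulVec v v) *ᵥ x = (v ⬝ᵥ x) • v := by
      ext i
      simp only [vecMulVec_apply, mulVec, dotProduct, Pi.smul_apply, smul_eq_mul,
        Finset.sum_mul]
      exact Finset.sum_congr rfl fun k _ => by ring
    rw [h, dotProduct_smul, smul_eq_mul, star_trivial, dotProduct_comm]
    exact mul_self_nonneg _

lemma trace_mul_vecMulVec (Z : Matrix (Fin d) (Fin d) ℝ) (v : Fin d → ℝ) :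
    (Z * vecMulVec v v).trace = v ⬝ᵥ Z *ᵥ v := by
  have h : Z * vecMulVec v v = vecMulVec (Z *ᵥ v) v := by
    ext i j
    simp only [vecMulVec_apply, mul_apply, mulVec, dotProduct, Finset.sum_mul]
    exact Finset.sum_congr rfl fun k _ => by ring
  rw [h]
  simp [Matrix.trace, Matrix.diag, vecMulVec_apply, dotProduct, mulVec, mul_comm]

lemma det_one_add_smul_vecMulVec (t : ℝ) (v : Fin d → ℝ) :
    (1 + t • vecMulVec v v).det = 1 + t * (v ⬝ᵥ v) := by
  have h : t • vecMulVec v v = replicateCol Unit (t • v) * replicateRow Unit v := by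
    rw [← vecMulVec_eq]
    ext i j
    simp [vecMulVec_apply, mul_assoc]
  rw [h, det_one_add_replicateCol_mul_replicateRow]
  simp [dotProduct_smul, dotProduct_comm, mul_comm]

lemma trace_eq_sum_eigenvalues' {A : Matrix (Fin d) (Fin d) ℝ} (hA : A.IsHermitian) :
    A.trace = ∑ i, hA.eigenvalues i := by
  simpa using hA.trace_eq_sum_eigenvalues

lemma log_det_add_card_le_trace' {A : Matrix (Fin d) (Fin d) ℝ} (hA : A.PosDef) :
    Real.log A.det + d ≤ A.trace := by
  have hev := hA.eigenvalues_pos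
  rw [hA.1.det_eq_prod_eigenvalues, trace_eq_sum_eigenvalues' hA.1]
  simp only [RCLike.ofReal_real_eq_id, id_eq]
  rw [Real.log_prod (fun i _ => (hev i).ne')]
  have h1 : ∑ i, Real.log (hA.1.eigenvalues i) ≤ ∑ i, (hA.1.eigenvalues i - 1) :=
    Finset.sum_le_sum fun i _ => Real.log_le_sub_one_of_pos (hev i)
  rw [Finset.sum_sub_distrib] at h1
  simp only [Finset.sum_const, Finset.card_univ, Fintype.card_fin, nsmul_eq_mul, mul_one] at h1
  linarith

lemma conj_sqrt_posDef {W Z : Matrix (Fin d) (Fin d) ℝ} (hW : W.PosDef) (hZ : Z.PosDef) :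
    (hZ.posSemidef.sqrt * W * hZ.posSemidef.sqrt).PosDef := by
  set S := hZ.posSemidef.sqrt with hSdef
  have hSh : Sᴴ = S := hZ.posSemidef.posSemidef_sqrt.1.eq
  have hSS : S * S = Z := hZ.posSemidef.sqrt_mul_self
  have hdetS : S.det ≠ 0 := by
    intro h
    have h2 : S.det * S.det = Z.det := by rw [← det_mul, hSS]
    rw [h, mul_zero] at h2
    exact hZ.det_pos.ne' h2.symm
  have hinj : Function.Injective (S.mulVec) := by
    rw [Matrix.mulVec_injective_iff_isUnit]
    exact (Matrix.isUnit_iff_isUnit_det S).mpr (isUnit_iff_ne_zero.mpr hdetS)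
  refine Matrix.PosDef.of_dotProduct_mulVec_pos ?_ fun x hx => ?_
  · unfold Matrix.IsHermitian
    rw [conjTranspose_mul, conjTranspose_mul, hSh, hW.1.eq, mul_assoc]
  · have hx' : S *ᵥ x ≠ 0 := fun h => hx (hinj (by rw [h, mulVec_zero]))
    have hpos := hW.dotProduct_mulVec_pos hx'
    have e1 : (S * W * S) *ᵥ x = S *ᵥ (W *ᵥ (S *ᵥ x)) := by
      rw [mulVec_mulVec, mulVec_mulVec, mul_assoc]
    rw [e1, dotProduct_mulVec]
    rwa [star_mulVec, hSh] at hpos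

lemma key_ineq {W Z : Matrix (Fin d) (Fin d) ℝ} (hW : W.PosDef) (hZ : Z.PosDef)
    {c : ℝ} (hc : 0 < c) :
    c * (Real.log (W.det * Z.det) - d * Real.log c + d) ≤ (Z * W).trace := by
  set S := hZ.posSemidef.sqrt with hSdef
  have hT : (S * W * S).PosDef := conj_sqrt_posDef hW hZ
  have hA : ((c⁻¹ : ℝ) • (S * W * S)).PosDef := posDef_smul' hT (inv_pos.mpr hc)
  have h := log_det_add_card_le_trace' hA
  have hdetSS : S.det * S.det = Z.det := by rw [← det_mul, hZ.posSemidef.sqrt_mul_self]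
  have hdetT : (S * W * S).det = W.det * Z.det := by
    rw [det_mul, det_mul, ← hdetSS]; ring
  have htrT : (S * W * S).trace = (Z * W).trace := by
    rw [Matrix.trace_mul_cycle, hZ.posSemidef.sqrt_mul_self]
  rw [det_smul, trace_smul, hdetT, htrT, smul_eq_mul] at h
  have hWZpos : 0 < W.det * Z.det := mul_pos hW.det_pos hZ.det_pos
  rw [Real.log_mul (by positivity) hWZpos.ne', Real.log_pow, Real.log_inv,
    Fintype.card_fin] at h
  have h2 := mul_le_mul_of_nonneg_left h hc.le
  rw [← mul_assoc, mul_inv_cancel₀ hc.ne', one_mul] at h2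
  nlinarith [h2]

end LogDetAux

open LogDetAux

/-- The dual cone of `K_logdet`: `v = (x,y,Z)` (with `Z` symmetric) satisfies `⟨v,q⟩ ≥ 0` for
all `q ∈ K_logdet` iff `x < 0`, `Z ≻ 0`, `y ≥ x (log det (-Z/x) + d)`, or `x = 0`, `y ≥ 0`,
`Z ⪰ 0`. -/
theorem stmt_8 (d : ℕ) (hd : 1 ≤ d) (x y : ℝ) (Z : Matrix (Fin d) (Fin d) ℝ)
    (hZ : Z.IsSymm) :
    (∀ q ∈ Klogdet d, 0 ≤ ip ((x, y, Z) : E d) q)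
      ↔ ((x < 0 ∧ Z.PosDef ∧ x * (Real.log (((-(x⁻¹)) • Z).det) + d) ≤ y)
        ∨ (x = 0 ∧ 0 ≤ y ∧ Z.PosSemidef)) := by
  classical
  constructor
  · intro h
    have hx0 : x ≤ 0 := by
      have h1 := h (-1, 0, 0) (Or.inr ⟨by norm_num, rfl, Matrix.PosSemidef.zero⟩)
      simp only [ip, Matrix.mul_zero, Matrix.trace_zero] at h1
      linarith
    have hZh : Z.IsHermitian := by
      rw [Matrix.IsHermitian, conjTranspose_eq_transpose_of_trivial]; exact hZ
    have hZpsd : Z.PosSemidef := by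
      refine Matrix.PosSemidef.of_dotProduct_mulVec_nonneg hZh fun v => ?_
      have h1 := h (0, 0, vecMulVec v v) (Or.inr ⟨le_refl 0, rfl, vecMulVec_psd v⟩)
      simp only [ip, mul_zero, zero_add] at h1
      rw [trace_mul_vecMulVec] at h1
      simpa using h1
    rcases lt_or_eq_of_le hx0 with hxneg | hxzero
    · -- x < 0
      have hZpd : Z.PosDef := by
        by_contra hnpd
        rw [Matrix.posDef_iff_dotProduct_mulVec] at hnpd
        push_neg at hnpd
        obtain ⟨v, hv0, hvle⟩ := hnpd hZh
        have hveq : v ⬝ᵥ Z *ᵥ v = 0 :=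
          le_antisymm (by simpa using hvle) (by simpa using hZpsd.dotProduct_mulVec_nonneg v)
        have hvvnn : 0 ≤ v ⬝ᵥ v := Finset.sum_nonneg fun i _ => mul_self_nonneg _
        have hvv : 0 < v ⬝ᵥ v :=
          lt_of_le_of_ne hvvnn fun hcon => hv0 (dotProduct_self_eq_zero.mp hcon.symm)
        set R : ℝ := (y + Z.trace) / (-x) with hR
        set t : ℝ := (Real.exp (|R| + 1) - 1) / (v ⬝ᵥ v) with ht
        have hexp : (1:ℝ) ≤ Real.exp (|R| + 1) := by
          have := Real.add_one_le_exp (|R| + 1)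
          have := abs_nonneg R
          linarith
        have htnn : 0 ≤ t := div_nonneg (by linarith) hvvnn
        have hWpd : (1 + t • vecMulVec v v).PosDef :=
          Matrix.PosDef.add_posSemidef Matrix.PosDef.one
            (posSemidef_smul (vecMulVec_psd v) htnn)
        have hdet : (1 + t • vecMulVec v v).det = Real.exp (|R| + 1) := by
          rw [det_one_add_smul_vecMulVec, ht]
          field_simp
          ring
        have hmem : ((Real.log ((1 + t • vecMulVec v v).det), 1, 1 + t • vecMulVec v v) : E d)
            ∈ Klogdet d := Or.inl ⟨one_pos, hWpd, by simp⟩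
        have h1 := h _ hmem
        simp only [ip, mul_one] at h1
        have htr : (Z * (1 + t • vecMulVec v v)).trace = Z.trace := by
          rw [Matrix.mul_add, Matrix.mul_one, Matrix.mul_smul, Matrix.trace_add,
            Matrix.trace_smul, trace_mul_vecMulVec, hveq, smul_zero, add_zero]
        rw [htr, hdet, Real.log_exp] at h1
        have hxR : R * (-x) = y + Z.trace := div_mul_cancel₀ _ (by linarith : (-x) ≠ 0)
        have hRabs : x * |R| ≤ x * R :=
          mul_le_mul_of_nonpos_left (le_abs_self R) hxneg.le
        nlinarith [h1, hRabs, hxR]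
      have hdetZ := hZpd.det_pos
      have hnx : (0:ℝ) < -x := by linarith
      set W : Matrix (Fin d) (Fin d) ℝ := (-x) • Z⁻¹ with hWdef
      have hWpd : W.PosDef := posDef_smul' hZpd.inv hnx
      have hmem : ((Real.log W.det, 1, W) : E d) ∈ Klogdet d := Or.inl ⟨one_pos, hWpd, by simp⟩
      have h1 := h _ hmem
      simp only [ip, mul_one] at h1
      have htr : (Z * W).trace = (-x) * d := by
        rw [hWdef, mul_smul_comm, Matrix.mul_nonsing_inv _ (isUnit_iff_ne_zero.mpr hdetZ.ne'),
          trace_smul, trace_one]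
        simp [Fintype.card_fin]
      have hdetW : W.det = (-x)^d * (Z.det)⁻¹ := by
        rw [hWdef, det_smul, det_nonsing_inv, Fintype.card_fin, Ring.inverse_eq_inv']
      have hdet2 : ((-(x⁻¹)) • Z).det = ((-x)⁻¹)^d * Z.det := by
        rw [det_smul, Fintype.card_fin, ← inv_neg]
      have hlogW : Real.log W.det = d * Real.log (-x) - Real.log Z.det := by
        rw [hdetW, Real.log_mul (by positivity) (by positivity), Real.log_pow, Real.log_inv]
        ring
      have hlogL : Real.log (((-(x⁻¹)) • Z).det) = Real.log Z.det - d * Real.log (-x) := by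
        rw [hdet2, Real.log_mul (by positivity) hdetZ.ne', Real.log_pow, Real.log_inv]
        ring
      refine Or.inl ⟨hxneg, hZpd, ?_⟩
      rw [hlogL]
      rw [hlogW, htr] at h1
      nlinarith [h1]
    · -- x = 0
      refine Or.inr ⟨hxzero, ?_, hZpsd⟩
      by_contra hy
      push_neg at hy
      set ε : ℝ := -y / (2 * (|Z.trace| + 1)) with hε
      have hden : (0:ℝ) < 2 * (|Z.trace| + 1) := by positivity
      have hεpos : 0 < ε := div_pos (by linarith) hden
      have hWpd : (ε • (1 : Matrix (Fin d) (Fin d) ℝ)).PosDef :=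
        posDef_smul' Matrix.PosDef.one hεpos
      have hmem : ((Real.log ((ε • (1 : Matrix (Fin d) (Fin d) ℝ)).det), 1,
          ε • (1 : Matrix (Fin d) (Fin d) ℝ)) : E d) ∈ Klogdet d :=
        Or.inl ⟨one_pos, hWpd, by simp⟩
      have h1 := h _ hmem
      simp only [ip, mul_one] at h1
      have htr : (Z * (ε • (1 : Matrix (Fin d) (Fin d) ℝ))).trace = ε * Z.trace := by
        rw [mul_smul_comm, Matrix.mul_one, trace_smul, smul_eq_mul]
      rw [htr, hxzero] at h1
      have hkey : ε * (2 * (|Z.trace| + 1)) = -y := by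
        rw [hε]; field_simp
      have habs : ε * Z.trace ≤ ε * |Z.trace| :=
        mul_le_mul_of_nonneg_left (le_abs_self _) hεpos.le
      nlinarith [h1, hkey, habs, hεpos, abs_nonneg Z.trace]
  · rintro (⟨hxneg, hZpd, hy⟩ | ⟨hxzero, hynn, hZpsd⟩) q hq
    · obtain ⟨a, b, W⟩ := q
      rcases hq with ⟨hb, hWpd, ha⟩ | ⟨ha, hb0, hWpsd⟩
      · simp only at hb hWpd ha
        simp only [ip]
        have hnx : (0:ℝ) < -x := by linarith
        have hcpos : 0 < (-x) * b := mul_pos hnx hb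
        have hkey := key_ineq hWpd hZpd hcpos
        have hdetW := hWpd.det_pos
        have hdetZ := hZpd.det_pos
        have e1 : Real.log ((b⁻¹ • W).det) = Real.log W.det - d * Real.log b := by
          rw [det_smul, Fintype.card_fin, Real.log_mul (by positivity) hdetW.ne',
            Real.log_pow, Real.log_inv]
          ring
        have e2 : Real.log (((-(x⁻¹)) • Z).det) = Real.log Z.det - d * Real.log (-x) := by
          rw [det_smul, Fintype.card_fin, ← inv_neg,
            Real.log_mul (by positivity) hdetZ.ne', Real.log_pow, Real.log_inv]
          ring
        have e3 : Real.log (W.det * Z.det) = Real.log W.det + Real.log Z.det :=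
          Real.log_mul hdetW.ne' hdetZ.ne'
        have e4 : Real.log ((-x) * b) = Real.log (-x) + Real.log b :=
          Real.log_mul hnx.ne' hb.ne'
        rw [e1] at ha
        rw [e2] at hy
        rw [e3, e4] at hkey
        have hxa : x * (b * (Real.log W.det - d * Real.log b)) ≤ x * a :=
          mul_le_mul_of_nonpos_left ha hxneg.le
        have hyb : x * (Real.log Z.det - d * Real.log (-x) + d) * b ≤ y * b :=
          mul_le_mul_of_nonneg_right hy hb.le
        nlinarith [hkey, hxa, hyb]
      · simp only at ha hb0 hWpsd
        simp only [ip, hb0, mul_zero, add_zero]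
        have h1 : 0 ≤ x * a := by nlinarith [mul_nonneg (neg_nonneg.mpr hxneg.le) (neg_nonneg.mpr ha)]
        have h2 : 0 ≤ (Z * W).trace := trace_mul_nonneg hZpd.posSemidef hWpsd
        linarith
    · obtain ⟨a, b, W⟩ := q
      rcases hq with ⟨hb, hWpd, ha⟩ | ⟨ha, hb0, hWpsd⟩
      · simp only at hb hWpd ha
        simp only [ip, hxzero, zero_mul, zero_add]
        have h1 : 0 ≤ y * b := mul_nonneg hynn hb.le
        have h2 : 0 ≤ (Z * W).trace := trace_mul_nonneg hZpsd hWpd.posSemidef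
        linarith
      · simp only at ha hb0 hWpsd
        simp only [ip, hxzero, zero_mul, zero_add, hb0, mul_zero]
        exact trace_mul_nonneg hZpsd hWpsd
end
end

section
/- Let d ≥ 2 be an integer, let n_y > 0 be real, set n := (0, n_y, 0) ∈ E, and let F_d := {(x, 0, Z) ∈ E : x ≤ 0 and Z is positive semidefinite} (which equals K_logdet ∩ {n}^⊥). Then for every η > 0 there exists κ > 0 such that for every q ∈ E with ⟨q, n⟩ = 0 and ‖q‖ ≤ η one has dist(q, F_d) ≤ κ · g_d(dist(q, K_logdet)). -/
open Matrix Filter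

noncomputable section

/-- The piecewise modified Boltzmann–Shannon entropy `g_d`. -/
def gd (t : ℝ) : ℝ :=
  if t = 0 then 0
  else if t ≤ Real.exp (-2) then -t * Real.log t
  else t + Real.exp (-2)

lemma aux_neg_mul_log {u : ℝ} (hu : 0 < u) (hu1 : u ≤ 1) : -(u * Real.log u) ≤ 1 - u := by
  have h := Real.log_le_sub_one_of_pos (inv_pos.2 hu)
  rw [Real.log_inv] at h
  have h2 : u * (-Real.log u) ≤ u * (u⁻¹ - 1) := mul_le_mul_of_nonneg_left h hu.le
  rw [mul_sub, mul_inv_cancel₀ hu.ne'] at h2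
  linarith

lemma aux_mono {y s : ℝ} (hy : 0 < y) (hys : y ≤ s) (hs1 : s ≤ 1) :
    -(y * Real.log y) ≤ -(s * Real.log s) + s := by
  have hs : 0 < s := lt_of_lt_of_le hy hys
  have hu : 0 < y / s := div_pos hy hs
  have hu1 : y / s ≤ 1 := (div_le_one hs).2 hys
  have hy' : y = (y / s) * s := (div_mul_cancel₀ _ hs.ne').symm
  have hlog : Real.log y = Real.log (y / s) + Real.log s := by
    rw [hy', Real.log_mul hu.ne' hs.ne']
    rw [← hy']
  have h1 : -(y / s * Real.log (y / s)) ≤ 1 - y / s := aux_neg_mul_log hu hu1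
  have hlogs : Real.log s ≤ 0 := Real.log_nonpos hs.le hs1
  have key : -(y * Real.log y) = s * (-(y / s * Real.log (y / s))) + (y / s) * (-(s * Real.log s)) := by
    rw [hlog]; field_simp; ring
  rw [key]
  have t1 : s * (-(y / s * Real.log (y / s))) ≤ s * (1 - y / s) := mul_le_mul_of_nonneg_left h1 hs.le
  have hnn : 0 ≤ -(s * Real.log s) := by nlinarith
  have t2 : (y / s) * (-(s * Real.log s)) ≤ 1 * (-(s * Real.log s)) :=
    mul_le_mul_of_nonneg_right hu1 hnn
  have t3 : s * (1 - y / s) ≤ s := by nlinarith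
  linarith

lemma aux_two_sqrt {s : ℝ} (hs : 0 < s) : -(s * Real.log s) ≤ 2 * Real.sqrt s := by
  have hss : 0 < Real.sqrt s := Real.sqrt_pos.2 hs
  have h := Real.log_le_sub_one_of_pos (inv_pos.2 hss)
  rw [Real.log_inv] at h
  have hmul : Real.sqrt s * Real.sqrt s = s := Real.mul_self_sqrt hs.le
  have h3 : s * (Real.sqrt s)⁻¹ = Real.sqrt s := by
    field_simp
    rw [sq, hmul]
  have hls : Real.log s = 2 * Real.log (Real.sqrt s) := by
    rw [Real.log_sqrt hs.le]; ring
  have h4 : s * (-Real.log (Real.sqrt s)) ≤ s * ((Real.sqrt s)⁻¹ - 1) :=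
    mul_le_mul_of_nonneg_left h hs.le
  rw [mul_sub, h3] at h4
  nlinarith

lemma trace_mul_self_eq {d : ℕ} {M : Matrix (Fin d) (Fin d) ℝ} (hM : M.IsSymm) :
    (M * M).trace = ∑ i, ∑ j, (M i j) ^ 2 := by
  unfold Matrix.trace Matrix.diag
  simp only [Matrix.mul_apply]
  refine Finset.sum_congr rfl fun i _ => Finset.sum_congr rfl fun j _ => ?_
  rw [hM.apply i j]; ring

lemma entry_sq_le {d : ℕ} {M : Matrix (Fin d) (Fin d) ℝ} (hM : M.IsSymm) (i j : Fin d) :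
    (M i j) ^ 2 ≤ (M * M).trace := by
  rw [trace_mul_self_eq hM]
  calc (M i j) ^ 2 ≤ ∑ j', (M i j') ^ 2 :=
        Finset.single_le_sum (f := fun j' => (M i j') ^ 2)
          (fun _ _ => sq_nonneg _) (Finset.mem_univ j)
    _ ≤ ∑ i', ∑ j', (M i' j') ^ 2 :=
        Finset.single_le_sum (f := fun i' => ∑ j', (M i' j') ^ 2)
          (fun i' _ => Finset.sum_nonneg fun _ _ => sq_nonneg _) (Finset.mem_univ i)

lemma trace_mul_self_nonneg {d : ℕ} {M : Matrix (Fin d) (Fin d) ℝ} (hM : M.IsSymm) :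
    0 ≤ (M * M).trace := by
  rw [trace_mul_self_eq hM]
  exact Finset.sum_nonneg fun _ _ => Finset.sum_nonneg fun _ _ => sq_nonneg _

lemma sdist_nonneg {d : ℕ} (q : E d) (S : Set (E d)) : 0 ≤ sdist q S :=
  Real.sInf_nonneg fun r ⟨s, _, hr⟩ => hr ▸ Real.sqrt_nonneg _

lemma sdist_le {d : ℕ} (q : E d) {S : Set (E d)} {f : E d} (hf : f ∈ S) :
    sdist q S ≤ nrm (q - f) :=
  csInf_le ⟨0, fun r ⟨s, _, hr⟩ => hr ▸ Real.sqrt_nonneg _⟩ ⟨f, hf, rfl⟩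

lemma zero_mem_Klogdet (d : ℕ) : (0 : E d) ∈ Klogdet d :=
  Or.inr ⟨le_refl 0, rfl, Matrix.PosSemidef.zero⟩

lemma exp2_lt_eight : Real.exp 2 < 8 := by
  have h := Real.exp_one_lt_d9
  have h2 : Real.exp 2 = Real.exp 1 * Real.exp 1 := by
    rw [← Real.exp_add]; norm_num
  nlinarith [Real.exp_pos 1]

lemma posdef_isSymm {d : ℕ} {A : Matrix (Fin d) (Fin d) ℝ} (hA : A.PosDef) : A.IsSymm := by
  have h := hA.1
  rwa [Matrix.IsHermitian, Matrix.conjTranspose_eq_transpose_of_trivial] at h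

set_option maxHeartbeats 2000000 in
lemma keyA (d : ℕ) (η : ℝ) (hη : 0 < η) (q : E d) (hsymm : q.2.2.IsSymm) (hy : q.2.1 = 0)
    (hqn : nrm q ≤ η) {s : ℝ} (hs : 0 < s) (hs2 : s ≤ 2 * Real.exp (-2))
    {p : E d} (hpK : p ∈ Klogdet d) (hp : nrm (q - p) ≤ s) :
    sdist q {p : E d | p.1 ≤ 0 ∧ p.2.1 = 0 ∧ p.2.2.PosSemidef}
      ≤ (max 0 (Real.log (d.factorial * (η + 1) ^ d)) + d + 2) * s + d * (-(s * Real.log s)) := by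
  set L' : ℝ := max 0 (Real.log (d.factorial * (η + 1) ^ d)) with hL'def
  have hL' : 0 ≤ L' := le_max_left _ _
  have hexp : Real.exp (-2) ≤ 1/3 := by
    rw [Real.exp_neg]
    rw [inv_le_comm₀ (Real.exp_pos 2) (by norm_num)]
    nlinarith [Real.add_one_le_exp 2]
  have hs1 : s < 1 := by linarith
  have hlogs : Real.log s ≤ 0 := Real.log_nonpos hs.le hs1.le
  have hnls : 0 ≤ -(s * Real.log s) := by nlinarith
  rcases hpK with hpos | hface
  · -- main branch : p.2.1 > 0, p.2.2 PosDef
    obtain ⟨hy', hZ', hx'⟩ := hpos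
    have hZ'symm : p.2.2.IsSymm := posdef_isSymm hZ'
    set M : Matrix (Fin d) (Fin d) ℝ := q.2.2 - p.2.2 with hMdef
    have hMsymm : M.IsSymm := by
      unfold Matrix.IsSymm
      rw [hMdef, Matrix.transpose_sub, hsymm, hZ'symm]
    have hT0 : 0 ≤ (M * M).trace := trace_mul_self_nonneg hMsymm
    have hqp : (q - p).1 = q.1 - p.1 ∧ (q - p).2.1 = q.2.1 - p.2.1 ∧ (q - p).2.2 = M := by
      constructor
      · rfl
      constructor
      · rfl
      · rfl
    have hnrm : nrm (q - p) = Real.sqrt ((q.1 - p.1) ^ 2 + (0 - p.2.1) ^ 2 + (M * M).trace) := by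
      rw [nrm, hqp.1, hqp.2.1, hqp.2.2, hy]
    have hsum : (q.1 - p.1) ^ 2 + (0 - p.2.1) ^ 2 + (M * M).trace ≤ s ^ 2 := by
      rw [hnrm] at hp
      exact (Real.sqrt_le_left hs.le).1 hp
    have hT : (M * M).trace ≤ s ^ 2 := by nlinarith
    have hxx : q.1 ≤ p.1 + s := by nlinarith
    have hys : p.2.1 ≤ s := by nlinarith
    -- entry bound on p.2.2
    have hTrq : (q.2.2 * q.2.2).trace ≤ η ^ 2 := by
      have h := (Real.sqrt_le_left hη.le).1 hqn
      rw [nrm] at hqn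
      have h2 := (Real.sqrt_le_left hη.le).1 hqn
      nlinarith [sq_nonneg q.1, sq_nonneg q.2.1]
    have hentry : ∀ i j, |p.2.2 i j| ≤ η + 1 := by
      intro i j
      have h1 : (q.2.2 i j) ^ 2 ≤ η ^ 2 := le_trans (entry_sq_le hsymm i j) hTrq
      have h2 : (M i j) ^ 2 ≤ s ^ 2 := le_trans (entry_sq_le hMsymm i j) hT
      have h3 : p.2.2 i j = q.2.2 i j - M i j := by rw [hMdef]; simp [Matrix.sub_apply]
      have h1' : |q.2.2 i j| ≤ η := by
        have := Real.sqrt_le_sqrt h1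
        rwa [Real.sqrt_sq_eq_abs, Real.sqrt_sq hη.le] at this
      have h2' : |M i j| ≤ s := by
        have := Real.sqrt_le_sqrt h2
        rwa [Real.sqrt_sq_eq_abs, Real.sqrt_sq hs.le] at this
      rw [h3, sub_eq_add_neg]
      refine (abs_add_le _ _).trans ?_
      rw [abs_neg]
      linarith
    have hdet : p.2.2.det ≤ (d.factorial : ℝ) * (η + 1) ^ d := by
      have h := Matrix.det_le (A := p.2.2) (abv := (AbsoluteValue.abs : AbsoluteValue ℝ ℝ)) hentry
      simp only [Fintype.card_fin, nsmul_eq_mul] at h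
      calc p.2.2.det ≤ |p.2.2.det| := le_abs_self _
        _ ≤ _ := h
    have hdetpos : 0 < p.2.2.det := hZ'.det_pos
    have hlogdet : Real.log p.2.2.det ≤ L' := by
      have hfac : (0 : ℝ) < (d.factorial : ℝ) * (η + 1) ^ d := by positivity
      calc Real.log p.2.2.det ≤ Real.log ((d.factorial : ℝ) * (η + 1) ^ d) :=
            (Real.log_le_log_iff hdetpos hfac).2 hdet
        _ ≤ L' := le_max_right _ _
    have hlogsplit : Real.log ((p.2.1⁻¹ • p.2.2).det)
        = Real.log p.2.2.det - d * Real.log p.2.1 := by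
      rw [Matrix.det_smul, Fintype.card_fin,
        Real.log_mul (pow_ne_zero _ (inv_ne_zero hy'.ne')) hdetpos.ne',
        Real.log_pow, Real.log_inv]
      ring
    have hylog : -(p.2.1 * Real.log p.2.1) ≤ -(s * Real.log s) + s := aux_mono hy' hys hs1.le
    have hx'2 : p.1 ≤ s * L' + d * (-(s * Real.log s) + s) := by
      rw [hlogsplit] at hx'
      have e1 : p.2.1 * Real.log p.2.2.det ≤ s * L' := by
        calc p.2.1 * Real.log p.2.2.det ≤ p.2.1 * L' :=
              mul_le_mul_of_nonneg_left hlogdet hy'.le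
          _ ≤ s * L' := mul_le_mul_of_nonneg_right hys hL'
      have e2 : p.2.1 * (Real.log p.2.2.det - d * Real.log p.2.1)
          = p.2.1 * Real.log p.2.2.det + d * (-(p.2.1 * Real.log p.2.1)) := by ring
      rw [e2] at hx'
      have e3 : (d : ℝ) * (-(p.2.1 * Real.log p.2.1)) ≤ d * (-(s * Real.log s) + s) :=
        mul_le_mul_of_nonneg_left hylog (Nat.cast_nonneg d)
      linarith
    -- the F point
    set f : E d := (min q.1 0, 0, p.2.2) with hfdef
    have hfF : f ∈ {p : E d | p.1 ≤ 0 ∧ p.2.1 = 0 ∧ p.2.2.PosSemidef} :=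
      ⟨min_le_right _ _, rfl, hZ'.posSemidef⟩
    have hdle := sdist_le q hfF
    set a : ℝ := q.1 - min q.1 0 with hadef
    have ha0 : 0 ≤ a := by
      rcases le_total q.1 0 with h | h
      · simp [hadef, min_eq_left h]
      · simp [hadef, min_eq_right h, h]
    have haB : a ≤ s * L' + d * (-(s * Real.log s) + s) + s := by
      rcases le_total q.1 0 with h | h
      · have : a = 0 := by simp [hadef, min_eq_left h]
        rw [this]
        have : (0:ℝ) ≤ (d:ℝ) * (-(s * Real.log s) + s) := by positivity
        nlinarith
      · have : a = q.1 := by simp [hadef, min_eq_right h]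
        rw [this]
        linarith
    have hnrmf : nrm (q - f) = Real.sqrt (a ^ 2 + 0 ^ 2 + (M * M).trace) := by
      rw [nrm]
      have e1 : (q - f).1 = a := by rw [hfdef, hadef]; rfl
      have e2 : (q - f).2.1 = 0 := by rw [hfdef]; simp [hy]
      have e3 : (q - f).2.2 = M := by rw [hfdef, hMdef]; rfl
      rw [e1, e2, e3]
    have hfbound : nrm (q - f) ≤ a + s := by
      rw [hnrmf, Real.sqrt_le_left (by linarith)]
      nlinarith
    calc sdist q {p : E d | p.1 ≤ 0 ∧ p.2.1 = 0 ∧ p.2.2.PosSemidef} ≤ nrm (q - f) := hdle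
      _ ≤ a + s := hfbound
      _ ≤ (L' + d + 2) * s + d * (-(s * Real.log s)) := by
          have hd : (d : ℝ) * (-(s * Real.log s) + s) = d * (-(s * Real.log s)) + d * s := by ring
          have he : (L' + d + 2) * s = s * L' + d * s + 2 * s := by ring
          linarith
  · -- p is already in the face
    have hdle := sdist_le q (S := {p : E d | p.1 ≤ 0 ∧ p.2.1 = 0 ∧ p.2.2.PosSemidef}) hface
    have : nrm (q - p) ≤ s := hp
    have hrest : 0 ≤ (L' + d + 1) * s + d * (-(s * Real.log s)) := by positivity
    have he : (L' + d + 2) * s + d * (-(s * Real.log s))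
        = s + ((L' + d + 1) * s + d * (-(s * Real.log s))) := by ring
    linarith

set_option maxHeartbeats 2000000 in
/-- Theorem 3.1 (entropic error bound concerning `F_d`): for `n = (0, n_y, 0)`, `n_y > 0`, and
any `η > 0` there is `κ > 0` with `dist(q, F_d) ≤ κ g_d(dist(q, K_logdet))` for all
`q ∈ {n}^⊥` with `‖q‖ ≤ η`. -/
theorem stmt_9 (d : ℕ) (hd : 2 ≤ d) (ny : ℝ) (hny : 0 < ny) :
    ∀ η : ℝ, 0 < η → ∃ κ : ℝ, 0 < κ ∧ ∀ q : E d, q.2.2.IsSymm →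
      ip q (0, ny, (0 : Matrix (Fin d) (Fin d) ℝ)) = 0 → nrm q ≤ η →
      sdist q {p : E d | p.1 ≤ 0 ∧ p.2.1 = 0 ∧ p.2.2.PosSemidef}
        ≤ κ * gd (sdist q (Klogdet d)) := by
  intro η hη
  set L' : ℝ := max 0 (Real.log (d.factorial * (η + 1) ^ d)) with hL'def
  have hL' : 0 ≤ L' := le_max_left _ _
  have hd0 : (0:ℝ) ≤ (d:ℝ) := Nat.cast_nonneg d
  set C : ℝ := L' + d + 2 with hCdef
  have hC : 0 < C := by rw [hCdef]; linarith
  set κ : ℝ := C + 2 * d + η * Real.exp 2 + 1 with hκdef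
  have hκ : 0 < κ := by
    have := Real.exp_pos 2
    rw [hκdef]; nlinarith
  refine ⟨κ, hκ, ?_⟩
  intro q hsymm hip hq
  have hy : q.2.1 = 0 := by
    have h1 : q.2.1 * ny = 0 := by simpa [ip] using hip
    rcases mul_eq_zero.1 h1 with h | h
    · exact h
    · exact absurd h hny.ne'
  set F : Set (E d) := {p : E d | p.1 ≤ 0 ∧ p.2.1 = 0 ∧ p.2.2.PosSemidef} with hFdef
  set t : ℝ := sdist q (Klogdet d) with htdef
  set D : ℝ := sdist q F with hDdef
  have hKne : Set.Nonempty {r : ℝ | ∃ s ∈ Klogdet d, r = nrm (q - s)} :=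
    ⟨nrm (q - 0), 0, zero_mem_Klogdet d, rfl⟩
  have ht0 : 0 ≤ t := sdist_nonneg q _
  have hDnn : 0 ≤ D := sdist_nonneg q _
  rcases eq_or_lt_of_le ht0 with h0 | hpos
  · -- t = 0
    have hgd : gd t = 0 := by rw [← h0]; simp [gd]
    rw [hgd, mul_zero]
    by_contra hcon
    push_neg at hcon
    have hCd : 0 < C + 2 * d := by linarith
    have hclaim : ∀ ε : ℝ, 0 < ε → ε ≤ 1/2 → D ≤ (C + 2*d) * ε := by
      intro ε hε hε2
      have hs : (0:ℝ) < ε^2 := by positivity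
      have hexp8 : (1:ℝ)/8 ≤ Real.exp (-2) := by
        rw [Real.exp_neg, le_inv_comm₀ (by norm_num) (Real.exp_pos 2)]
        linarith [exp2_lt_eight]
      have hs2 : ε^2 ≤ 2 * Real.exp (-2) := by nlinarith
      have hlt : sInf {r : ℝ | ∃ s ∈ Klogdet d, r = nrm (q - s)} < ε^2 := by
        have : t < ε^2 := by rw [← h0]; exact hs
        rw [htdef] at this
        unfold sdist at this
        exact this
      obtain ⟨r, ⟨p, hpK, hr⟩, hrlt⟩ := exists_lt_of_csInf_lt hKne hlt
      have hp : nrm (q - p) ≤ ε^2 := by rw [← hr]; exact hrlt.le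
      have hk := keyA d η hη q hsymm hy hq hs hs2 hpK hp
      have h2s := aux_two_sqrt hs
      rw [Real.sqrt_sq hε.le] at h2s
      have hdd := mul_le_mul_of_nonneg_left h2s hd0
      have hD1 : D ≤ C * ε^2 + (d:ℝ) * (2 * ε) := by
        rw [hDdef, hFdef]
        calc sdist q {p : E d | p.1 ≤ 0 ∧ p.2.1 = 0 ∧ p.2.2.PosSemidef}
            ≤ C * ε^2 + d * (-(ε^2 * Real.log (ε^2))) := by rw [hCdef, hL'def]; exact hk
          _ ≤ C * ε^2 + (d:ℝ) * (2 * ε) := by linarith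
      have hε1 : ε^2 ≤ ε := by nlinarith
      calc D ≤ C * ε^2 + (d:ℝ) * (2 * ε) := hD1
        _ ≤ C * ε + 2*d*ε := by nlinarith
        _ = (C + 2*d) * ε := by ring
    set ε0 : ℝ := min (1/2) (D / (2 * (C + 2*d))) with hε0def
    have hε0 : 0 < ε0 := lt_min (by norm_num) (by positivity)
    have hc1 := hclaim ε0 hε0 (min_le_left _ _)
    have hc2 : (C + 2*d) * ε0 ≤ (C + 2*d) * (D / (2 * (C + 2*d))) :=
      mul_le_mul_of_nonneg_left (min_le_right _ _) hCd.le
    have hc3 : (C + 2*d) * (D / (2 * (C + 2*d))) = D / 2 := by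
      field_simp
    rw [hc3] at hc2
    have hfin : D ≤ D / 2 := le_trans hc1 hc2
    linarith
  · -- 0 < t
    have htne : t ≠ 0 := hpos.ne'
    rcases le_or_gt t (Real.exp (-2)) with hsmall | hbig
    · have hgd : gd t = -t * Real.log t := by
        unfold gd; rw [if_neg htne, if_pos hsmall]
      have hlt2 : sInf {r : ℝ | ∃ s ∈ Klogdet d, r = nrm (q - s)} < 2 * t := by
        have : t < 2 * t := by linarith
        rw [htdef] at this; unfold sdist at this
        exact (by rw [htdef]; unfold sdist; linarith : sInf {r : ℝ | ∃ s ∈ Klogdet d, r = nrm (q - s)} < 2 * t)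
      obtain ⟨r, ⟨p, hpK, hr⟩, hrlt⟩ := exists_lt_of_csInf_lt hKne hlt2
      have hp : nrm (q - p) ≤ 2 * t := by rw [← hr]; exact hrlt.le
      have h2tpos : 0 < 2 * t := by linarith
      have h2te : 2 * t ≤ 2 * Real.exp (-2) := by linarith
      have hk := keyA d η hη q hsymm hy hq h2tpos h2te hpK hp
      have hlogt : Real.log t ≤ -2 := by
        have := (Real.log_le_log_iff hpos (Real.exp_pos (-2))).2 hsmall
        rwa [Real.log_exp] at this
      have hlog2t : Real.log (2*t) = Real.log 2 + Real.log t := Real.log_mul two_ne_zero htne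
      have hlog2 : 0 ≤ Real.log 2 := Real.log_nonneg one_le_two
      have h1 : -((2*t) * Real.log (2*t)) ≤ 2 * (-(t * Real.log t)) := by
        rw [hlog2t]; nlinarith
      have h2t : 2*t ≤ -(t * Real.log t) := by nlinarith
      have hX0 : 0 ≤ -(t * Real.log t) := by linarith
      have hdd := mul_le_mul_of_nonneg_left h1 hd0
      have hC2 : C * (2*t) ≤ C * (-(t * Real.log t)) := mul_le_mul_of_nonneg_left h2t hC.le
      have hD1 : D ≤ (C + 2*d) * (-(t * Real.log t)) := by
        have hk' : D ≤ C * (2*t) + (d:ℝ) * (-((2*t) * Real.log (2*t))) := by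
          rw [hDdef, hFdef, hCdef, hL'def]; exact hk
        have hring : (C + 2*(d:ℝ)) * (-(t * Real.log t))
            = C * (-(t * Real.log t)) + (d:ℝ) * (2 * (-(t * Real.log t))) := by ring
        rw [hring]; linarith
      rw [hgd]
      have hκge : C + 2*(d:ℝ) ≤ κ := by rw [hκdef]; nlinarith [Real.exp_pos 2]
      have : (C + 2*(d:ℝ)) * (-(t * Real.log t)) ≤ κ * (-(t * Real.log t)) :=
        mul_le_mul_of_nonneg_right hκge hX0
      have hfix : -t * Real.log t = -(t * Real.log t) := by ring
      rw [hfix]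
      linarith
    · have hgd : gd t = t + Real.exp (-2) := by
        unfold gd; rw [if_neg htne, if_neg (not_le.2 hbig)]
      have hzF : (0 : E d) ∈ F := ⟨le_refl 0, rfl, Matrix.PosSemidef.zero⟩
      have hD : D ≤ η := by
        have h := sdist_le q (S := F) hzF
        rw [sub_zero] at h
        exact le_trans h hq
      rw [hgd]
      have hee : Real.exp 2 * Real.exp (-2) = 1 := by rw [← Real.exp_add]; norm_num
      have h1 : η * Real.exp 2 ≤ κ := by rw [hκdef]; linarith
      have h2 : η ≤ κ * Real.exp (-2) := by
        have := mul_le_mul_of_nonneg_right h1 (Real.exp_pos (-2)).le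
        nlinarith
      have h3 : κ * Real.exp (-2) ≤ κ * (t + Real.exp (-2)) := by
        have : Real.exp (-2) ≤ t + Real.exp (-2) := by linarith
        exact mul_le_mul_of_nonneg_left this hκ.le
      linarith
end
end
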